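/- Let T_P = <X₁, X₂, -X₁X₂, X₃, ..., (-1)^{t+1}X₁···X_t> be the pure trace form of the Cayley-Dickson algebra A_t over K = K₀(X₁,...,X_t), with K₀ formally real and t ≥ 2. Then for every positive integer n, both n × T_P and <1> ⊥ n × T_P are anisotropic over K. -/

import Mathlib

open scoped Classical in
/-- Coefficients of a diagonal sum of squares below twice the common trailing bound. -/
lemma coeff_sum_sq {A : Type} [CommRing A] {ι : Type} [Fintype ι]
    (c : ι → A) (f : ι → Polynomial A) (r : ℕ)
    (hf : ∀ i, ∀ m < r, (f i).coeff m = 0) :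
    (∀ m < 2 * r, (∑ i, Polynomial.C (c i) * f i ^ 2).coeff m = 0) ∧
    (∑ i, Polynomial.C (c i) * f i ^ 2).coeff (2 * r) = ∑ i, c i * ((f i).coeff r) ^ 2 := by
  have key : ∀ i, ∀ m ≤ 2 * r,
      (f i ^ 2).coeff m = if m = 2 * r then ((f i).coeff r) ^ 2 else 0 := by
    intro i m hm
    rw [sq, Polynomial.coeff_mul]
    split_ifs with h
    · subst h
      rw [Finset.sum_eq_single (r, r)]
      · rw [sq]
      · rintro ⟨a, b⟩ hab hne
        rw [Finset.HasAntidiagonal.mem_antidiagonal] at hab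
        have h2 : ¬(a = r ∧ b = r) := by
          rintro ⟨rfl, rfl⟩; exact hne rfl
        have : a < r ∨ b < r := by omega
        rcases this with h' | h'
        · rw [hf i a h', zero_mul]
        · rw [hf i b h', mul_zero]
      · intro hmem
        exact absurd (Finset.HasAntidiagonal.mem_antidiagonal.mpr (by ring)) hmem
    · apply Finset.sum_eq_zero
      rintro ⟨a, b⟩ hab
      rw [Finset.HasAntidiagonal.mem_antidiagonal] at hab
      have : a < r ∨ b < r := by omega
      rcases this with h' | h'
      · rw [hf i a h', zero_mul]
      · rw [hf i b h', mul_zero]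
  constructor
  · intro m hm
    rw [Polynomial.finset_sum_coeff]
    apply Finset.sum_eq_zero
    intro i _
    rw [Polynomial.coeff_C_mul, key i m (le_of_lt hm), if_neg (by omega), mul_zero]
  · rw [Polynomial.finset_sum_coeff]
    apply Finset.sum_congr rfl
    intro i _
    rw [Polynomial.coeff_C_mul, key i (2 * r) le_rfl, if_pos rfl]

open scoped Classical in
/-- If not all `f i` vanish, there is a minimal degree where some coefficient is nonzero. -/
lemma exists_min_coeff {A : Type} [CommRing A] {ι : Type} [Fintype ι]
    (f : ι → Polynomial A) (hne : ¬ ∀ i, f i = 0) :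
    ∃ r : ℕ, (∀ i, ∀ m < r, (f i).coeff m = 0) ∧ ∃ i, (f i).coeff r ≠ 0 := by
  push_neg at hne
  obtain ⟨i₀, hi₀⟩ := hne
  have hex : ∃ m : ℕ, ∃ i, (f i).coeff m ≠ 0 := by
    refine ⟨(f i₀).natTrailingDegree, i₀, ?_⟩
    exact Polynomial.trailingCoeff_nonzero_iff_nonzero.mpr hi₀
  refine ⟨Nat.find hex, ?_, Nat.find_spec hex⟩
  intro i m hm
  by_contra hco
  exact (Nat.find_min hex hm) ⟨i, hco⟩

/-- Springer-type lemma: anisotropy of `φ₁ ⊥ X·φ₂` over `A[X]` from anisotropy of the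
residue forms over `A`. -/
lemma springer_poly {A : Type} [CommRing A] {ι₀ ι₁ : Type} [Fintype ι₀] [Fintype ι₁]
    (c : ι₀ → A) (d : ι₁ → A)
    (hc : ∀ x : ι₀ → A, ∑ i, c i * x i ^ 2 = 0 → ∀ i, x i = 0)
    (hd : ∀ x : ι₁ → A, ∑ i, d i * x i ^ 2 = 0 → ∀ i, x i = 0)
    (f : ι₀ → Polynomial A) (g : ι₁ → Polynomial A)
    (h : ∑ i, Polynomial.C (c i) * f i ^ 2
        + Polynomial.X * ∑ i, Polynomial.C (d i) * g i ^ 2 = 0) :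
    (∀ i, f i = 0) ∧ (∀ i, g i = 0) := by
  set F := ∑ i, Polynomial.C (c i) * f i ^ 2 with hF
  set G := ∑ i, Polynomial.C (d i) * g i ^ 2 with hG
  have keyF : (¬ ∀ i, f i = 0) →
      ∃ r, (∀ m < 2 * r, F.coeff m = 0) ∧ F.coeff (2 * r) ≠ 0 := by
    intro hne
    obtain ⟨r, hlow, i₀, hi₀⟩ := exists_min_coeff f hne
    obtain ⟨h1, h2⟩ := coeff_sum_sq c f r hlow
    refine ⟨r, h1, ?_⟩
    rw [h2]
    intro hz
    exact hi₀ (hc _ hz i₀)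
  have keyG : (¬ ∀ i, g i = 0) →
      ∃ s, (∀ m < 2 * s, G.coeff m = 0) ∧ G.coeff (2 * s) ≠ 0 := by
    intro hne
    obtain ⟨s, hlow, i₀, hi₀⟩ := exists_min_coeff g hne
    obtain ⟨h1, h2⟩ := coeff_sum_sq d g s hlow
    refine ⟨s, h1, ?_⟩
    rw [h2]
    intro hz
    exact hi₀ (hd _ hz i₀)
  by_cases hf : ∀ i, f i = 0
  · have hF0 : F = 0 := Finset.sum_eq_zero fun i _ => by rw [hf i]; ring
    have hXG : Polynomial.X * G = 0 := by
      have := h; rw [hF0, zero_add] at this; exact this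
    by_cases hg : ∀ i, g i = 0
    · exact ⟨hf, hg⟩
    · obtain ⟨s, _, hs2⟩ := keyG hg
      exfalso
      apply hs2
      have : (Polynomial.X * G).coeff (2 * s + 1) = 0 := by rw [hXG]; simp
      rwa [Polynomial.coeff_X_mul] at this
  · obtain ⟨r, hr1, hr2⟩ := keyF hf
    exfalso
    by_cases hg : ∀ i, g i = 0
    · have hG0 : G = 0 := Finset.sum_eq_zero fun i _ => by rw [hg i]; ring
      rw [hG0, mul_zero, add_zero] at h
      exact hr2 (by rw [h]; simp)
    · obtain ⟨s, hs1, hs2⟩ := keyG hg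
      rcases le_or_gt r s with hrs | hrs
      · -- look at coefficient 2r
        have hco : F.coeff (2 * r) + (Polynomial.X * G).coeff (2 * r) = 0 := by
          have := congrArg (fun p => Polynomial.coeff p (2 * r)) h
          simpa using this
        have hXG : (Polynomial.X * G).coeff (2 * r) = 0 := by
          rcases Nat.eq_zero_or_pos r with h0 | h0
          · subst h0; simp
          · have he : 2 * r = (2 * r - 1) + 1 := by omega
            rw [he, Polynomial.coeff_X_mul]
            exact hs1 _ (by omega)
        rw [hXG, add_zero] at hco
        exact hr2 hco
      · -- s < r : look at coefficient 2s+1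
        have hco : F.coeff (2 * s + 1) + (Polynomial.X * G).coeff (2 * s + 1) = 0 := by
          have := congrArg (fun p => Polynomial.coeff p (2 * s + 1)) h
          simpa using this
        rw [Polynomial.coeff_X_mul, hr1 _ (by omega), zero_add] at hco
        exact hs2 hco

/-- Anisotropy over the polynomial ring: any diagonal form whose coefficients are
`± (squarefree monomials)`, with constant sign on each monomial class, is anisotropic
over `K₀[X₁,…,X_t]` for `K₀` formally real. -/
lemma polyAniso (K₀ : Type) [Field K₀]
    (hreal : ∀ (ι : Type) [Fintype ι] (x : ι → K₀), ∑ i, x i ^ 2 = 0 → ∀ i, x i = 0) :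
    ∀ (t : ℕ) (ι : Type) [Fintype ι] (b : ι → Fin t → Bool) (ε : ι → K₀),
      (∀ i, ε i = 1 ∨ ε i = -1) →
      (∀ i j, b i = b j → ε i = ε j) →
      ∀ (a : ι → MvPolynomial (Fin t) K₀),
      ∑ i, MvPolynomial.C (ε i) * (∏ j, if b i j then MvPolynomial.X j else 1) * a i ^ 2 = 0 →
      ∀ i, a i = 0 := by
  intro t
  induction t with
  | zero =>
    intro ι _ b ε hsign hconst a h i
    have hballeq : ∀ j, b j = b i := by
      intro j; funext k; exact k.elim0
    have hεeq : ∀ j, ε j = ε i := fun j => hconst j i (hballeq j)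
    let e := MvPolynomial.isEmptyAlgEquiv K₀ (Fin 0)
    have h2 : ∑ j, ε i * (e (a j)) ^ 2 = 0 := by
      have := congrArg e h
      rw [map_sum, map_zero] at this
      rw [← this]
      apply Finset.sum_congr rfl
      intro j _
      rw [Finset.univ_eq_empty, Finset.prod_empty, mul_one, map_mul, map_pow, hεeq j]
      congr 1
      have h1 : MvPolynomial.C (ε i) = algebraMap K₀ (MvPolynomial (Fin 0) K₀) (ε i) := rfl
      rw [h1, AlgEquiv.commutes]
      rfl
    rw [← Finset.mul_sum] at h2
    have hεne : ε i ≠ 0 := by rcases hsign i with h' | h' <;> rw [h'] <;> norm_num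
    have h3 : ∑ j, (e (a j)) ^ 2 = 0 := by
      rcases mul_eq_zero.mp h2 with h' | h'
      · exact absurd h' hεne
      · exact h'
    have h4 := hreal _ (fun j => e (a j)) h3 i
    exact e.injective (by rw [h4, map_zero])
  | succ t ih =>
    intro ι _ b ε hsign hconst a h
    classical
    let e := MvPolynomial.finSuccEquiv K₀ t
    have hprod : ∀ i, e (∏ j, if b i j then MvPolynomial.X j else 1)
        = (if b i 0 then Polynomial.X else 1)
          * Polynomial.C (∏ j : Fin t, if b i j.succ then MvPolynomial.X j else 1) := by
      intro i
      rw [Fin.prod_univ_succ, map_mul]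
      congr 1
      · split_ifs
        · exact MvPolynomial.finSuccEquiv_X_zero
        · exact map_one _
      · rw [map_prod]
        calc ∏ j : Fin t, e (if b i j.succ then MvPolynomial.X j.succ else 1)
            = ∏ j : Fin t, Polynomial.C (if b i j.succ then MvPolynomial.X j else 1) := by
              apply Finset.prod_congr rfl
              intro j _
              split_ifs
              · exact MvPolynomial.finSuccEquiv_X_succ
              · simp
          _ = Polynomial.C (∏ j : Fin t, if b i j.succ then MvPolynomial.X j else 1) :=
              (map_prod _ _ _).symm
    have he : ∑ i, Polynomial.C (MvPolynomial.C (ε i)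
            * ∏ j : Fin t, if b i j.succ then MvPolynomial.X j else 1)
          * (if b i 0 then Polynomial.X else 1) * (e (a i)) ^ 2 = 0 := by
      have h0 := congrArg e h
      rw [map_sum, map_zero] at h0
      rw [← h0]
      apply Finset.sum_congr rfl
      intro i _
      have hC : e (MvPolynomial.C (ε i)) = Polynomial.C (MvPolynomial.C (ε i)) := by
        have h1 : MvPolynomial.C (ε i)
            = algebraMap K₀ (MvPolynomial (Fin (t + 1)) K₀) (ε i) := rfl
        rw [h1, AlgEquiv.commutes]
        rfl
      simp only [map_mul, map_pow, hprod i, hC]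
      ring
    have hsplit : ∑ i : {i : ι // b i 0 = false},
          Polynomial.C (MvPolynomial.C (ε i.1)
            * ∏ j : Fin t, if b i.1 j.succ then MvPolynomial.X j else 1) * (e (a i.1)) ^ 2
        + Polynomial.X * ∑ i : {i : ι // ¬ (b i 0 = false)},
          Polynomial.C (MvPolynomial.C (ε i.1)
            * ∏ j : Fin t, if b i.1 j.succ then MvPolynomial.X j else 1) * (e (a i.1)) ^ 2
        = 0 := by
      rw [Finset.mul_sum, ← he,
        ← Fintype.sum_subtype_add_sum_subtype (fun i : ι => b i 0 = false)
          (fun i => Polynomial.C (MvPolynomial.C (ε i)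
            * ∏ j : Fin t, if b i j.succ then MvPolynomial.X j else 1)
          * (if b i 0 then Polynomial.X else 1) * (e (a i)) ^ 2)]
      refine congrArg₂ (· + ·) ?_ ?_
      · apply Finset.sum_congr rfl
        rintro ⟨i, hi⟩ _
        rw [hi]
        simp
      · apply Finset.sum_congr rfl
        rintro ⟨i, hi⟩ _
        rw [Bool.not_eq_false] at hi
        rw [hi]
        simp
        ring
    have main := springer_poly
      (fun i : {i : ι // b i 0 = false} => MvPolynomial.C (ε i.1)
        * ∏ j : Fin t, if b i.1 j.succ then MvPolynomial.X j else 1)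
      (fun i : {i : ι // ¬ (b i 0 = false)} => MvPolynomial.C (ε i.1)
        * ∏ j : Fin t, if b i.1 j.succ then MvPolynomial.X j else 1)
      (by
        intro x hx
        refine ih _ (fun i j => b i.1 j.succ) (fun i => ε i.1) (fun i => hsign i.1) ?_ x ?_
        · intro i j hb
          apply hconst
          funext k
          refine Fin.cases ?_ ?_ k
          · rw [i.2, j.2]
          · intro k'; exact congrFun hb k'
        · exact hx)
      (by
        intro x hx
        refine ih _ (fun i j => b i.1 j.succ) (fun i => ε i.1) (fun i => hsign i.1) ?_ x ?_
        · intro i j hb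
          apply hconst
          funext k
          refine Fin.cases ?_ ?_ k
          · have hi := i.2; have hj := j.2
            rw [Bool.not_eq_false] at hi hj
            rw [hi, hj]
          · intro k'; exact congrFun hb k'
        · exact hx)
      (fun i => e (a i.1)) (fun i => e (a i.1)) hsplit
    intro i
    by_cases hb : b i 0 = false
    · apply e.injective; rw [map_zero]; exact main.1 ⟨i, hb⟩
    · apply e.injective; rw [map_zero]; exact main.2 ⟨i, hb⟩

/-- Anisotropy over the rational function field, by clearing denominators. -/
lemma fieldAniso (K₀ : Type) [Field K₀]
    (hreal : ∀ (ι : Type) [Fintype ι] (x : ι → K₀), ∑ i, x i ^ 2 = 0 → ∀ i, x i = 0)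
    (t : ℕ) (ι : Type) [Fintype ι] (b : ι → Fin t → Bool) (ε : ι → K₀)
    (hsign : ∀ i, ε i = 1 ∨ ε i = -1)
    (hconst : ∀ i j, b i = b j → ε i = ε j)
    (a : ι → FractionRing (MvPolynomial (Fin t) K₀))
    (h : ∑ i, algebraMap (MvPolynomial (Fin t) K₀) (FractionRing (MvPolynomial (Fin t) K₀))
        (MvPolynomial.C (ε i) * ∏ j, if b i j then MvPolynomial.X j else 1) * a i ^ 2 = 0) :
    ∀ i, a i = 0 := by
  classical
  obtain ⟨d, hd⟩ := IsLocalization.exist_integer_multiples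
    (nonZeroDivisors (MvPolynomial (Fin t) K₀)) Finset.univ a
  have hd' : ∀ i : ι, ∃ q : MvPolynomial (Fin t) K₀,
      algebraMap (MvPolynomial (Fin t) K₀) (FractionRing (MvPolynomial (Fin t) K₀)) q
      = algebraMap (MvPolynomial (Fin t) K₀) (FractionRing (MvPolynomial (Fin t) K₀))
          (d : MvPolynomial (Fin t) K₀) * a i := by
    intro i
    obtain ⟨q, hq⟩ := hd i (Finset.mem_univ i)
    exact ⟨q, by rw [hq, Algebra.smul_def]⟩
  choose p hp using hd'
  have hinj : Function.Injective (algebraMap (MvPolynomial (Fin t) K₀)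
      (FractionRing (MvPolynomial (Fin t) K₀))) :=
    IsFractionRing.injective (MvPolynomial (Fin t) K₀) (FractionRing (MvPolynomial (Fin t) K₀))
  have hpoly : ∑ i, MvPolynomial.C (ε i) * (∏ j, if b i j then MvPolynomial.X j else 1)
      * p i ^ 2 = 0 := by
    apply hinj
    rw [map_sum, map_zero]
    have key : ∀ i : ι, algebraMap (MvPolynomial (Fin t) K₀)
          (FractionRing (MvPolynomial (Fin t) K₀))
        (MvPolynomial.C (ε i) * (∏ j, if b i j then MvPolynomial.X j else 1) * p i ^ 2)
        = (algebraMap (MvPolynomial (Fin t) K₀) (FractionRing (MvPolynomial (Fin t) K₀))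
            (d : MvPolynomial (Fin t) K₀)) ^ 2
          * (algebraMap (MvPolynomial (Fin t) K₀) (FractionRing (MvPolynomial (Fin t) K₀))
              (MvPolynomial.C (ε i) * ∏ j, if b i j then MvPolynomial.X j else 1)
            * a i ^ 2) := by
      intro i
      rw [map_mul, map_pow, hp i, map_mul]
      ring
    rw [Finset.sum_congr rfl (fun i _ => key i), ← Finset.mul_sum, h, mul_zero]
  have hzero := polyAniso K₀ hreal t ι b ε hsign hconst p hpoly
  intro i
  have hda : algebraMap (MvPolynomial (Fin t) K₀) (FractionRing (MvPolynomial (Fin t) K₀))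
      (d : MvPolynomial (Fin t) K₀) * a i = 0 := by
    rw [← hp i, hzero i, map_zero]
  have hdne : algebraMap (MvPolynomial (Fin t) K₀) (FractionRing (MvPolynomial (Fin t) K₀))
      (d : MvPolynomial (Fin t) K₀) ≠ 0 := by
    intro hzero'
    exact nonZeroDivisors.coe_ne_zero d (hinj (by rw [hzero', map_zero]))
  rcases mul_eq_zero.mp hda with h' | h'
  · exact absurd h' hdne
  · exact h'

/-- The images of the indeterminates `Xᵢ` in the rational function field
`K = K₀(X₁, …, X_t)`. -/
noncomputable def xi (K₀ : Type) [Field K₀] (t : ℕ) (i : Fin t) :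
    FractionRing (MvPolynomial (Fin t) K₀) :=
  algebraMap (MvPolynomial (Fin t) K₀) (FractionRing (MvPolynomial (Fin t) K₀))
    (MvPolynomial.X i)

/-- The diagonal coefficients of the pure trace form
`T_P = <X₁, X₂, -X₁X₂, X₃, …, (-1)^{t+1} X₁⋯X_t>` of the Cayley-Dickson algebra `A_t`
over `K = K₀(X₁, …, X_t)`: the coefficient attached to a nonempty subset
`S ⊆ {1, …, t}` is `(-1)^{|S| + 1} ∏_{i ∈ S} Xᵢ`. -/
noncomputable def pureTraceCoeff (K₀ : Type) [Field K₀] (t : ℕ)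
    (S : {S : Finset (Fin t) // S.Nonempty}) :
    FractionRing (MvPolynomial (Fin t) K₀) :=
  (-1) ^ (S.1.card + 1) * ∏ i ∈ S.1, xi K₀ t i

/-- For `K₀` formally real, `t ≥ 2` and every positive integer `n`, both
`n × T_P` and `<1> ⊥ n × T_P` are anisotropic over `K = K₀(X₁, …, X_t)`. -/
theorem nTP_and_one_perp_nTP_anisotropic (K₀ : Type) [Field K₀]
    (hreal : ∀ (m : ℕ) (x : Fin m → K₀), ∑ i, x i ^ 2 = 0 → x = 0)
    (t : ℕ) (ht : 2 ≤ t) (n : ℕ) (hn : 1 ≤ n) :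
    (∀ y : Fin n → {S : Finset (Fin t) // S.Nonempty} →
        FractionRing (MvPolynomial (Fin t) K₀),
      ∑ m, ∑ S, pureTraceCoeff K₀ t S * y m S ^ 2 = 0 → y = 0) ∧
    (∀ (x : FractionRing (MvPolynomial (Fin t) K₀))
        (y : Fin n → {S : Finset (Fin t) // S.Nonempty} →
          FractionRing (MvPolynomial (Fin t) K₀)),
      x ^ 2 + ∑ m, ∑ S, pureTraceCoeff K₀ t S * y m S ^ 2 = 0 → x = 0 ∧ y = 0) := by
  classical
  have hreal' : ∀ (ι : Type) [Fintype ι] (x : ι → K₀), ∑ i, x i ^ 2 = 0 → ∀ i, x i = 0 := by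
    intro ι _ x hx i
    let e := Fintype.equivFin ι
    have hsum : ∑ j : Fin (Fintype.card ι), (x (e.symm j)) ^ 2 = 0 := by
      rw [Equiv.sum_comp e.symm (fun i => x i ^ 2)]
      exact hx
    have := congrFun (hreal _ _ hsum) (e i)
    simpa using this
  -- the second statement implies the first, so we prove the second.
  have main : ∀ (x : FractionRing (MvPolynomial (Fin t) K₀))
      (y : Fin n → {S : Finset (Fin t) // S.Nonempty} →
        FractionRing (MvPolynomial (Fin t) K₀)),
      x ^ 2 + ∑ m, ∑ S, pureTraceCoeff K₀ t S * y m S ^ 2 = 0 → x = 0 ∧ y = 0 := by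
    intro x y h
    let ι' := Option (Fin n × {S : Finset (Fin t) // S.Nonempty})
    let b' : ι' → Fin t → Bool := fun i => i.elim (fun _ => false)
      (fun p j => decide (j ∈ p.2.1))
    let ε' : ι' → K₀ := fun i => i.elim 1 (fun p => (-1) ^ (p.2.1.card + 1))
    let a' : ι' → FractionRing (MvPolynomial (Fin t) K₀) := fun i => i.elim x
      (fun p => y p.1 p.2)
    have hsign : ∀ i, ε' i = 1 ∨ ε' i = -1 := by
      rintro (_ | p)
      · left; rfl
      · rcases Nat.even_or_odd (p.2.1.card + 1) with he | ho
        · left; exact he.neg_one_pow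
        · right; exact ho.neg_one_pow
    have hconst : ∀ i j, b' i = b' j → ε' i = ε' j := by
      rintro (_ | p) (_ | q) hb
      · rfl
      · exfalso
        obtain ⟨s, hs⟩ := q.2.2
        have := congrFun hb s
        simp [b', hs] at this
      · exfalso
        obtain ⟨s, hs⟩ := p.2.2
        have := congrFun hb s
        simp [b', hs] at this
      · have hSeq : p.2.1 = q.2.1 := by
          ext s
          have := congrFun hb s
          simpa [b'] using this
        simp only [ε', Option.elim]
        rw [hSeq]
    have hcoef : ∀ (m : Fin n) (S : {S : Finset (Fin t) // S.Nonempty}),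
        algebraMap (MvPolynomial (Fin t) K₀) (FractionRing (MvPolynomial (Fin t) K₀))
          (MvPolynomial.C (ε' (some (m, S)))
            * ∏ j, if b' (some (m, S)) j then MvPolynomial.X j else 1)
        = pureTraceCoeff K₀ t S := by
      intro m S
      have h1 : (∏ j, if b' (some (m, S)) j then MvPolynomial.X j else 1)
          = ∏ j ∈ S.1, (MvPolynomial.X j : MvPolynomial (Fin t) K₀) := by
        rw [← Fintype.prod_ite_mem S.1 MvPolynomial.X]
        apply Finset.prod_congr rfl
        intro j _
        simp [b']
      have h2 : MvPolynomial.C (ε' (some (m, S)))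
          = (-1 : MvPolynomial (Fin t) K₀) ^ (S.1.card + 1) := by
        simp only [ε', Option.elim]
        rw [map_pow, map_neg, map_one]
      rw [h1, h2, map_mul, map_pow, map_neg, map_one, map_prod]
      rfl
    have hsum : ∑ i : ι',
        algebraMap (MvPolynomial (Fin t) K₀) (FractionRing (MvPolynomial (Fin t) K₀))
          (MvPolynomial.C (ε' i) * ∏ j, if b' i j then MvPolynomial.X j else 1)
          * a' i ^ 2 = 0 := by
      rw [Fintype.sum_option]
      have hnone : algebraMap (MvPolynomial (Fin t) K₀)
          (FractionRing (MvPolynomial (Fin t) K₀))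
          (MvPolynomial.C (ε' none) * ∏ j, if b' none j then MvPolynomial.X j else 1)
          * a' none ^ 2 = x ^ 2 := by
        simp [ε', b', a']
      rw [hnone, Fintype.sum_prod_type]
      rw [Finset.sum_congr rfl (fun m _ => Finset.sum_congr rfl
        (fun S _ => by rw [hcoef m S]))]
      exact h
    have hz := fieldAniso K₀ hreal' t ι' b' ε' hsign hconst a' hsum
    refine ⟨hz none, ?_⟩
    funext m S
    exact hz (some (m, S))
  refine ⟨?_, main⟩
  intro y hy
  have := main 0 y (by rw [hy]; ring)
  exact this.2
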